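/- Let α ∈ (0,1) be irrational with slowly growing denominators. Then there exists N₀ such that for every integer N ≥ N₀ and all a, ā ∈ ℝ there exists an integer j with 0 ≤ j ≤ N (log N)³ and ‖ā + jα − a‖ ≤ 1/N. -/
import Mathlib


/-- Distance from a real number to the nearest integer. -/
noncomputable def distToInt (x : ℝ) : ℝ := |x - round x|

/-- `α` has slowly growing continued fraction denominators: eventually
`q_{n+1} ≤ q_n (log q_n)²`. -/
def SlowDens (α : ℝ) : Prop :=
  ∃ n₀ : ℕ, ∀ n : ℕ, n₀ ≤ n →
    (GenContFract.of α).dens (n + 1) ≤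
      (GenContFract.of α).dens n * (Real.log ((GenContFract.of α).dens n)) ^ 2

open GenContFract Real

private lemma contsAux_int (α : ℝ) (hnt : ∀ n, ¬(GenContFract.of α).TerminatedAt n) :
    ∀ m : ℕ, ∃ A B : ℤ, ((GenContFract.of α).contsAux m).a = (A : ℝ) ∧
      ((GenContFract.of α).contsAux m).b = (B : ℝ) := by
  intro m
  induction m using Nat.strong_induction_on with
  | _ m IH =>
    match m with
    | 0 => exact ⟨1, 0, by simp [GenContFract.contsAux], by simp [GenContFract.contsAux]⟩
    | 1 => exact ⟨⌊α⌋, 1, by simp [GenContFract.contsAux, GenContFract.of_h_eq_floor],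
        by simp [GenContFract.contsAux]⟩
    | (m + 2) =>
      obtain ⟨gp, hgp⟩ := Option.ne_none_iff_exists'.1 (hnt m)
      obtain ⟨A1, B1, hA1, hB1⟩ := IH (m + 1) (by omega)
      obtain ⟨A0, B0, hA0, hB0⟩ := IH m (by omega)
      have ha : gp.a = 1 := of_partNum_eq_one (partNum_eq_s_a hgp)
      obtain ⟨z, hz⟩ := exists_int_eq_of_partDen (partDen_eq_s_b hgp)
      have hrec := contsAux_recurrence hgp rfl rfl
      refine ⟨z * A1 + A0, z * B1 + B0, ?_, ?_⟩ <;>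
        simp [hrec, ha, hz, hA1, hB1, hA0, hB0]

private lemma numden_int (α : ℝ) (hnt : ∀ n, ¬(GenContFract.of α).TerminatedAt n) (n : ℕ) :
    ∃ P Q : ℤ, (GenContFract.of α).nums n = (P : ℝ) ∧ (GenContFract.of α).dens n = (Q : ℝ) := by
  obtain ⟨A, B, hA, hB⟩ := contsAux_int α hnt (n + 1)
  exact ⟨A, B, by rw [num_eq_conts_a, nth_cont_eq_succ_nth_contAux, hA],
    by rw [den_eq_conts_b, nth_cont_eq_succ_nth_contAux, hB]⟩

private lemma numden_coprime (α : ℝ) (hnt : ∀ n, ¬(GenContFract.of α).TerminatedAt n) (n : ℕ)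
    {P Q : ℤ} (hP : (GenContFract.of α).nums n = (P : ℝ))
    (hQ : (GenContFract.of α).dens n = (Q : ℝ)) : IsCoprime P Q := by
  obtain ⟨P', Q', hP', hQ'⟩ := numden_int α hnt (n + 1)
  have hdet := SimpContFract.determinant (s := SimpContFract.of α) (n := n) ?_
  · rw [SimpContFract.of] at hdet
    simp only at hdet
    rw [hP, hQ, hP', hQ'] at hdet
    have hd : P * Q' - Q * P' = (-1) ^ (n + 1) := by exact_mod_cast hdet
    have he : ((-1 : ℤ) ^ (n + 1)) * ((-1 : ℤ) ^ (n + 1)) = 1 := by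
      rw [← pow_add]; exact Even.neg_one_pow ⟨n + 1, by ring⟩
    exact ⟨(-1) ^ (n + 1) * Q', -((-1) ^ (n + 1) * P'), by
      have : (-1 : ℤ) ^ (n + 1) * Q' * P + -((-1) ^ (n + 1) * P') * Q
          = (-1) ^ (n + 1) * (P * Q' - Q * P') := by ring
      rw [this, hd, he]⟩
  · exact hnt n

private lemma grid_hit (P Q : ℤ) (hQ : 0 < Q) (hco : IsCoprime P Q) (β x : ℝ) :
    ∃ j : ℕ, (j : ℝ) < (Q : ℝ) ∧
      distToInt (j * β - x) ≤ 1 / (2 * Q) + Q * |β - P / Q| := by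
  obtain ⟨u, w, huw⟩ := hco
  set t : ℤ := round ((Q : ℝ) * x) with ht
  set j₀ : ℤ := t * u with hj₀
  set j := (j₀ % Q).toNat with hjdef
  have hj : (j : ℤ) = j₀ % Q := Int.toNat_of_nonneg (Int.emod_nonneg _ hQ.ne')
  have hjlt : (j : ℤ) < Q := by rw [hj]; exact Int.emod_lt_of_pos _ hQ
  have hjnn : (0 : ℤ) ≤ (j : ℤ) := Int.natCast_nonneg j
  refine ⟨j, by exact_mod_cast hjlt, ?_⟩
  set k : ℤ := -(t * w) - j₀ / Q * P with hk
  have key : (j : ℤ) * P = t + k * Q := by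
    rw [hj, Int.emod_def, hk, hj₀]
    linear_combination t * huw
  have hQR : (0 : ℝ) < (Q : ℝ) := by exact_mod_cast hQ
  have keyR : (j : ℝ) * P = t + k * Q := by exact_mod_cast key
  have hsplit : (j : ℝ) * β - x - k = j * (β - P / Q) + ((t : ℝ) / Q - x) := by
    field_simp
    linear_combination keyR
  have h1 : |(t : ℝ) / Q - x| ≤ 1 / (2 * Q) := by
    have e : (t : ℝ) / Q - x = ((t : ℝ) - Q * x) / Q := by field_simp
    have habs : |(Q : ℝ) * x - t| ≤ 1 / 2 := abs_sub_round _
    rw [e, abs_div, abs_of_pos hQR, abs_sub_comm]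
    calc |(Q : ℝ) * x - t| / Q ≤ (1 / 2) / Q := by
          exact div_le_div_of_nonneg_right habs hQR.le
      _ = 1 / (2 * Q) := by ring
  have h2 : (j : ℝ) * |β - P / Q| ≤ Q * |β - P / Q| := by
    have : (j : ℝ) ≤ Q := by exact_mod_cast hjlt.le
    exact mul_le_mul_of_nonneg_right this (abs_nonneg _)
  calc distToInt (j * β - x) ≤ |(j : ℝ) * β - x - k| := round_le _ k
    _ = |(j : ℝ) * (β - P / Q) + ((t : ℝ) / Q - x)| := by rw [hsplit]
    _ ≤ (j : ℝ) * |β - P / Q| + |(t : ℝ) / Q - x| := by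
        refine (abs_add_le _ _).trans ?_
        rw [abs_mul, abs_of_nonneg (by positivity : (0 : ℝ) ≤ (j : ℝ))]
    _ ≤ 1 / (2 * Q) + Q * |β - P / Q| := by linarith

private lemma log_ge_four {N : ℕ} (hN : 55 ≤ N) : (4 : ℝ) ≤ Real.log N := by
  have hN0 : (0 : ℝ) < N := by exact_mod_cast Nat.lt_of_lt_of_le (by norm_num) hN
  rw [Real.le_log_iff_exp_le hN0]
  have h1 : rexp 4 = rexp 1 ^ 4 := by rw [Real.exp_one_pow]; norm_num
  have h2 : rexp 1 ^ 4 ≤ 2.7182818286 ^ 4 :=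
    pow_le_pow_left₀ (Real.exp_pos 1).le Real.exp_one_lt_d9.le 4
  have h3 : (2.7182818286 : ℝ) ^ 4 ≤ 55 := by norm_num
  have h4 : (55 : ℝ) ≤ N := by exact_mod_cast hN
  linarith

private lemma final_ineq {N : ℕ} (hN : 55 ≤ N) :
    2 * (N : ℝ) * Real.log (2 * N) ^ 2 ≤ (N : ℝ) * Real.log N ^ 3 := by
  have hN0 : (0 : ℝ) < N := by exact_mod_cast Nat.lt_of_lt_of_le (by norm_num) hN
  have hL : (4 : ℝ) ≤ Real.log N := log_ge_four hN
  have hlog2 : Real.log 2 < 0.6931471808 := Real.log_two_lt_d9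
  have hlog2' : (0 : ℝ) < Real.log 2 := Real.log_pos (by norm_num)
  have hsplit : Real.log (2 * N) = Real.log 2 + Real.log N :=
    Real.log_mul (by norm_num) hN0.ne'
  rw [hsplit]
  have key : 2 * (Real.log 2 + Real.log N) ^ 2 ≤ Real.log N ^ 3 := by
    nlinarith [sq_nonneg (Real.log N - 4), sq_nonneg (Real.log N)]
  nlinarith [hN0.le, key]

/-- For `α` with slowly growing denominators, for all large `N` any two points on the
circle can be brought `1/N`-close in the horizontal direction within `N (log N)³`
steps of the rotation. -/
theorem stmt7 (α : ℝ) (hα : α ∈ Set.Ioo (0 : ℝ) 1) (hirr : Irrational α)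
    (hslow : SlowDens α) :
    ∃ N₀ : ℕ, ∀ N : ℕ, N₀ ≤ N → ∀ a abar : ℝ, ∃ j : ℕ,
      (j : ℝ) ≤ N * (Real.log N) ^ 3 ∧ distToInt (abar + j * α - a) ≤ 1 / N := by
  classical
  obtain ⟨n₀, hn₀⟩ := hslow
  have hter : ¬(GenContFract.of α).Terminates := by
    intro h
    obtain ⟨q, hq⟩ := (GenContFract.terminates_iff_rat α).1 h
    exact hirr ⟨q, hq.symm⟩
  have hnt : ∀ n, ¬(GenContFract.of α).TerminatedAt n := fun n h => hter ⟨n, h⟩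
  set q : ℕ → ℝ := fun n => (GenContFract.of α).dens n with hqdef
  have hq1 : ∀ n, (1 : ℝ) ≤ q n := by
    intro n
    have := succ_nth_fib_le_of_nth_den (v := α) (n := n) (Or.inr (hnt _))
    have h2 : (1 : ℝ) ≤ (Nat.fib (n + 1) : ℝ) := by
      exact_mod_cast Nat.one_le_iff_ne_zero.2 (Nat.fib_pos.2 n.succ_pos).ne'
    exact h2.trans this
  have hqmono : Monotone q := monotone_nat_of_le_succ fun n => of_den_mono
  refine ⟨max 55 (⌈q n₀⌉₊ + 1), fun N hN a abar => ?_⟩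
  have hN55 : 55 ≤ N := le_trans (le_max_left _ _) hN
  have hNq : q n₀ < N := by
    have h1 : (⌈q n₀⌉₊ + 1 : ℕ) ≤ N := le_trans (le_max_right _ _) hN
    have h2 : q n₀ ≤ (⌈q n₀⌉₊ : ℝ) := Nat.le_ceil _
    have h3 : ((⌈q n₀⌉₊ + 1 : ℕ) : ℝ) ≤ (N : ℝ) := by exact_mod_cast h1
    push_cast at h3
    linarith
  have hN0 : (0 : ℝ) < N := by exact_mod_cast Nat.lt_of_lt_of_le (by norm_num) hN55
  -- there is some index with `2N ≤ q`
  have hex : ∃ n, (2 * N : ℝ) ≤ q n := by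
    refine ⟨2 * N + 4, ?_⟩
    have h1 := succ_nth_fib_le_of_nth_den (v := α) (n := 2 * N + 4) (Or.inr (hnt _))
    have h2 : 2 * N + 5 ≤ Nat.fib (2 * N + 5) := Nat.le_fib_self (by omega)
    have h3 : ((2 * N : ℕ) : ℝ) ≤ (Nat.fib (2 * N + 4 + 1) : ℝ) := by
      exact_mod_cast le_trans (by omega) h2
    push_cast at h3 ⊢
    linarith [h3.trans h1]
  obtain ⟨n, hn, hmin⟩ : ∃ n, (2 * N : ℝ) ≤ q n ∧ ∀ m, m < n → q m < 2 * N :=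
    ⟨Nat.find hex, Nat.find_spec hex, fun m hm => lt_of_not_ge (Nat.find_min hex hm)⟩
  -- `n = m + 1` with `m ≥ n₀`
  have hnpos : 0 < n := by
    rcases Nat.eq_zero_or_pos n with h | h
    · exfalso
      have : q 0 = 1 := zeroth_den_eq_one
      rw [h, this] at hn
      have : (110 : ℝ) ≤ 2 * N := by
        have : (55 : ℝ) ≤ N := by exact_mod_cast hN55
        linarith
      linarith
    · exact h
  obtain ⟨m, rfl⟩ : ∃ m, n = m + 1 := ⟨n - 1, by omega⟩
  have hmn₀ : n₀ ≤ m := by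
    by_contra hc
    push_neg at hc
    have h1 : q (m + 1) ≤ q n₀ := hqmono (by omega)
    have : (2 * N : ℝ) ≤ q n₀ := hn.trans h1
    linarith
  have hqm : q m < 2 * N := hmin m (by omega)
  -- slow growth bound on `q (m+1)`
  have hlogqm : Real.log (q m) ≤ Real.log (2 * N) := by
    refine Real.log_le_log (by linarith [hq1 m]) ?_
    linarith
  have hlogqm0 : 0 ≤ Real.log (q m) := Real.log_nonneg (hq1 m)
  have hslowm := hn₀ m hmn₀
  have hqn_le : q (m + 1) ≤ 2 * N * Real.log (2 * N) ^ 2 := by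
    calc q (m + 1) ≤ q m * Real.log (q m) ^ 2 := hslowm
      _ ≤ 2 * N * Real.log (2 * N) ^ 2 := by
          have h1 : Real.log (q m) ^ 2 ≤ Real.log (2 * N) ^ 2 := by
            apply pow_le_pow_left₀ hlogqm0 hlogqm
          have h2 : (0 : ℝ) ≤ q m := by linarith [hq1 m]
          nlinarith [hq1 m]
  -- integer numerator and denominator, coprime
  obtain ⟨P, Q, hP, hQ⟩ := numden_int α hnt (m + 1)
  have hco : IsCoprime P Q := numden_coprime α hnt (m + 1) hP hQ
  have hQR : (2 * N : ℝ) ≤ (Q : ℝ) := by rw [← hQ]; exact hn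
  have hQpos : 0 < Q := by
    have : (0 : ℝ) < (Q : ℝ) := by linarith
    exact_mod_cast this
  -- approximation quality of the convergent
  have happrox : |α - (P : ℝ) / Q| ≤ 1 / ((Q : ℝ) * q (m + 2)) := by
    have h1 := abs_sub_convs_le (v := α) (n := m + 1) (hnt _)
    rw [conv_eq_num_div_den, hP, hQ] at h1
    exact h1
  obtain ⟨j, hjlt, hjd⟩ := grid_hit P Q hQpos hco α (a - abar)
  refine ⟨j, ?_, ?_⟩
  · -- bound on j
    have h1 : (j : ℝ) ≤ 2 * N * Real.log (2 * N) ^ 2 := by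
      have : (j : ℝ) ≤ (Q : ℝ) := hjlt.le
      rw [← hQ] at this
      exact this.trans hqn_le
    calc (j : ℝ) ≤ 2 * N * Real.log (2 * N) ^ 2 := h1
      _ ≤ N * Real.log N ^ 3 := by
          have := final_ineq hN55
          push_cast at this ⊢
          linarith
  · -- distance bound
    have harg : abar + (j : ℝ) * α - a = (j : ℝ) * α - (a - abar) := by ring
    rw [show distToInt (abar + (j : ℝ) * α - a) = distToInt ((j : ℝ) * α - (a - abar)) by
      rw [harg]]
    refine hjd.trans ?_
    have hq2 : q (m + 1) ≤ q (m + 2) := hqmono (by omega)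
    have hq2pos : (0 : ℝ) < q (m + 2) := by linarith [hq1 (m + 2)]
    have hQRpos : (0 : ℝ) < (Q : ℝ) := by linarith
    have hb1 : 1 / (2 * (Q : ℝ)) ≤ 1 / (4 * N) := by
      apply one_div_le_one_div_of_le (by linarith) (by linarith)
    have hb2 : (Q : ℝ) * |α - (P : ℝ) / Q| ≤ 1 / (2 * N) := by
      calc (Q : ℝ) * |α - (P : ℝ) / Q| ≤ (Q : ℝ) * (1 / ((Q : ℝ) * q (m + 2))) :=
            mul_le_mul_of_nonneg_left happrox hQRpos.le
        _ = 1 / q (m + 2) := by field_simp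
        _ ≤ 1 / (2 * N) := by
            apply one_div_le_one_div_of_le (by linarith) ?_
            have : (2 * N : ℝ) ≤ q (m + 1) := hn
            linarith
    calc 1 / (2 * (Q : ℝ)) + Q * |α - (P : ℝ) / Q| ≤ 1 / (4 * N) + 1 / (2 * N) := by linarith
      _ ≤ 1 / N := by
          rw [div_add_div _ _ (by positivity) (by positivity), div_le_div_iff₀ (by positivity)
            (by positivity)]
          ring_nf
          nlinarith
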